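/- Let X be a real normed vector space, Y a rational vector space, f : X → Y, s ≥ 1, and B = {x ∈ X : ‖x‖ < ε} for some ε > 0. If Δ_h^s f(x) = 0 for all x ∈ X and all h ∈ B, then Δ_{h_1} ⋯ Δ_{h_s} f(x) = 0 for all x, h_1, ..., h_s ∈ X. -/

import Mathlib

/-- The difference operator `Δ_h f (x) = f (x + h) - f x`. -/
def dd {X Y : Type*} [Add X] [Sub Y] (h : X) (f : X → Y) : X → Y :=
  fun x => f (x + h) - f x

/-- Iterated difference `Δ_{h₁}(Δ_{h₂ ⋯ hₛ} f)` for a list of steps. -/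
def ddIter {X Y : Type*} [Add X] [Sub Y] (hs : List X) (f : X → Y) : X → Y :=
  hs.foldr dd f

open Finset

/-! ### Alternating binomial sums -/

private def TsumZ (m k : ℕ) : ℤ := ∑ i ∈ range (m+1), (-1)^(m+i) * (m.choose i) * (i:ℤ)^k

private lemma TsumZ_rec (m k : ℕ) :
    TsumZ (m+1) (k+1) = (m+1) * ∑ t ∈ range (k+1), (k.choose t) * TsumZ m t := by
  have h1 : TsumZ (m+1) (k+1)
      = ∑ j ∈ range (m+1), (-1)^(m+j) * ((m+1) * (m.choose j)) * ((j:ℤ)+1)^k := by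
    rw [TsumZ, Finset.sum_range_succ']
    simp only [Nat.cast_zero, zero_pow (Nat.succ_ne_zero k), mul_zero, add_zero]
    refine Finset.sum_congr rfl fun j hj => ?_
    have hc : (((m+1).choose (j+1) : ℤ)) * ((j:ℤ)+1) = ((m:ℤ)+1) * (m.choose j) := by
      exact_mod_cast (Nat.add_one_mul_choose_eq m j).symm
    have hsgn : ((-1:ℤ))^(m+1+(j+1)) = (-1)^(m+j) := by
      have h2 : m+1+(j+1) = (m+j) + 2 := by ring
      rw [h2, pow_add]; norm_num
    push_cast
    rw [hsgn]
    have h3 : ((j:ℤ)+1)^(k+1) = ((j:ℤ)+1)^k * ((j:ℤ)+1) := by ring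
    rw [h3]
    linear_combination ((-1:ℤ))^(m+j) * ((j:ℤ)+1)^k * hc
  have h2 : ∀ j : ℕ, ((j:ℤ)+1)^k = ∑ t ∈ range (k+1), (k.choose t) * (j:ℤ)^t := by
    intro j
    rw [add_pow]
    exact Finset.sum_congr rfl fun t ht => by rw [one_pow]; ring
  rw [h1]
  simp only [h2, Finset.mul_sum, Finset.sum_mul]
  rw [Finset.sum_comm]
  refine Finset.sum_congr rfl fun t ht => ?_
  rw [TsumZ, Finset.mul_sum, Finset.mul_sum]
  refine Finset.sum_congr rfl fun j hj => ?_
  ring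

private lemma TsumZ_zero (m : ℕ) : TsumZ (m+1) 0 = 0 := by
  have h := sub_pow (1:ℤ) 1 (m+1)
  rw [sub_self, zero_pow (Nat.succ_ne_zero m)] at h
  rw [TsumZ]
  rw [h]
  refine Finset.sum_congr rfl fun i hi => ?_
  rw [one_pow, one_pow, pow_zero]
  have : i + (m+1) = m+1+i := by ring
  rw [this]
  ring

private lemma TsumZ_lt : ∀ m k, k < m → TsumZ m k = 0 := by
  intro m
  induction m with
  | zero => intro k hk; omega
  | succ m ih =>
    intro k hk
    cases k with
    | zero => exact TsumZ_zero m
    | succ k =>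
      rw [TsumZ_rec]
      have : ∑ t ∈ range (k+1), ((k.choose t : ℤ)) * TsumZ m t = 0 := by
        refine Finset.sum_eq_zero fun t ht => ?_
        rw [ih t (by simp at ht; omega)]
        ring
      rw [this, mul_zero]

private lemma TsumZ_diag : ∀ m, TsumZ m m = m.factorial := by
  intro m
  induction m with
  | zero => simp [TsumZ]
  | succ m ih =>
    rw [TsumZ_rec, Finset.sum_range_succ]
    have : ∑ t ∈ range m, ((m.choose t : ℤ)) * TsumZ m t = 0 := by
      refine Finset.sum_eq_zero fun t ht => ?_
      rw [TsumZ_lt m t (by simp at ht; omega)]; ring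
    rw [this, zero_add, ih, Nat.choose_self, Nat.factorial_succ]
    push_cast; ring

/-! ### Identities in a commutative ring -/

section CommRingIdent
variable {R : Type*} [CommRing R]

private lemma cast_Tsum (m k : ℕ) : ((TsumZ m k : ℤ) : R)
    = ∑ i ∈ range (m+1), (-1:R)^(m+i) * (m.choose i : R) * (i:R)^k := by
  rw [TsumZ]
  push_cast
  rfl

private lemma I1 (g h : R) (m : ℕ) :
    ∑ j ∈ range (m+1), (-1:R)^(m+j) * (m.choose j : R) * (g^j*h - 1)^(m+1)
    = ∑ i ∈ range (m+2), (-1:R)^(m+1+i) * ((m+1).choose i : R) * ((g^i - 1)^m * h^i) := by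
  have e1 : ∀ j, (g^j*h - 1)^(m+1)
      = ∑ i ∈ range (m+2), (-1:R)^(i+(m+1)) * (g^i)^j * h^i * ((m+1).choose i : R) := by
    intro j
    rw [sub_pow]
    refine Finset.sum_congr rfl fun i hi => ?_
    rw [one_pow, mul_pow]
    rw [← pow_mul g j i, ← pow_mul g i j, Nat.mul_comm j i]
    ring
  have e2 : ∀ i, (g^i - 1)^m = ∑ j ∈ range (m+1), (-1:R)^(j+m) * (g^i)^j * (m.choose j : R) := by
    intro i
    rw [sub_pow]
    refine Finset.sum_congr rfl fun j hj => ?_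
    rw [one_pow]; ring
  simp only [e1, Finset.mul_sum]
  rw [Finset.sum_comm]
  refine Finset.sum_congr rfl fun i hi => ?_
  rw [e2, Finset.sum_mul, Finset.mul_sum]
  refine Finset.sum_congr rfl fun j hj => ?_
  have hs : (-1:R)^(m+j) * (-1)^(i+(m+1)) = (-1)^(m+1+i) * (-1)^(j+m) := by
    rw [← pow_add, ← pow_add]
    have : m + j + (i + (m+1)) = m+1+i + (j+m) := by ring
    rw [this]
  calc (-1:R)^(m+j) * (m.choose j : R) * ((-1:R)^(i+(m+1)) * (g^i)^j * h^i * (((m+1).choose i : R)))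
      = ((-1:R)^(m+j) * (-1)^(i+(m+1))) * (m.choose j : R) * (g^i)^j * h^i * (((m+1).choose i : R)) := by ring
    _ = ((-1:R)^(m+1+i) * (-1)^(j+m)) * (m.choose j : R) * (g^i)^j * h^i * (((m+1).choose i : R)) := by rw [hs]
    _ = (-1:R)^(m+1+i) * ((m+1).choose i : R) * ((-1:R)^(j+m) * (g^i)^j * (m.choose j : R) * h^i) := by ring

private lemma geom_decomp (g : R) : ∀ i : ℕ, ∃ r : R, ∑ t ∈ range i, g^t = (i:R) + (g-1) * r := by
  intro i
  induction i with
  | zero => exact ⟨0, by simp⟩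
  | succ i ih =>
    obtain ⟨r, hr⟩ := ih
    refine ⟨r + ∑ t ∈ range i, g^t, ?_⟩
    rw [Finset.sum_range_succ]
    push_cast
    linear_combination hr - geom_sum_mul g i

private lemma pow_sub_one_decomp (g : R) (i m : ℕ) :
    ∃ W : R, (g^i - 1)^m = (i:R)^m * (g-1)^m + (g-1)^(m+1) * W := by
  obtain ⟨r, hr⟩ := geom_decomp g i
  have h1 : (g^i - 1) = (g-1) * ∑ t ∈ range i, g^t := by
    linear_combination (geom_sum_mul g i).symm
  have h2 : ∃ W : R, (∑ t ∈ range i, g^t)^m = (i:R)^m + (g-1) * W := by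
    have hd : ((∑ t ∈ range i, g^t) - (i:R)) ∣ ((∑ t ∈ range i, g^t)^m - ((i:R))^m) :=
      sub_dvd_pow_sub_pow _ _ m
    have hd2 : (g-1 : R) ∣ ((∑ t ∈ range i, g^t) - (i:R)) := ⟨r, by linear_combination hr⟩
    obtain ⟨W, hW⟩ := hd2.trans hd
    exact ⟨W, by linear_combination hW⟩
  obtain ⟨W, hW⟩ := h2
  refine ⟨W, ?_⟩
  rw [h1, mul_pow]
  linear_combination ((g-1):R)^m * hW

private lemma pow_one_add_decomp (h : R) : ∀ i : ℕ, ∃ V : R, h^i = 1 + (i:R)*(h-1) + (h-1)^2*V := by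
  intro i
  induction i with
  | zero => exact ⟨0, by simp⟩
  | succ i ih =>
    obtain ⟨V, hV⟩ := ih
    refine ⟨V + (i:R) + (h-1)*V, ?_⟩
    rw [pow_succ, hV]
    push_cast
    ring

private lemma P_decomp (h : R) (m : ℕ) :
    ∃ Q : R, ∑ i ∈ range (m+2), (-1:R)^(m+1+i) * ((m+1).choose i : R) * (i:R)^m * h^i
      = (((m+1).factorial : ℕ) : R) * (h-1) + (h-1)^2 * Q := by
  choose V hV using pow_one_add_decomp h
  refine ⟨∑ i ∈ range (m+2), (-1:R)^(m+1+i) * ((m+1).choose i : R) * (i:R)^m * V i, ?_⟩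
  have e1 : ∑ i ∈ range (m+2), (-1:R)^(m+1+i) * ((m+1).choose i : R) * (i:R)^m * h^i
      = (∑ i ∈ range (m+2), (-1:R)^(m+1+i) * ((m+1).choose i : R) * (i:R)^m)
        + (∑ i ∈ range (m+2), (-1:R)^(m+1+i) * ((m+1).choose i : R) * (i:R)^(m+1)) * (h-1)
        + (h-1)^2 * ∑ i ∈ range (m+2), (-1:R)^(m+1+i) * ((m+1).choose i : R) * (i:R)^m * V i := by
    rw [Finset.sum_mul, Finset.mul_sum, ← Finset.sum_add_distrib, ← Finset.sum_add_distrib]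
    refine Finset.sum_congr rfl fun i hi => ?_
    rw [hV i, pow_succ]
    ring
  rw [e1, ← cast_Tsum, ← cast_Tsum, TsumZ_lt (m+1) m (by omega), TsumZ_diag (m+1)]
  push_cast
  ring

end CommRingIdent

/-! ### The translation-operator algebra -/

section Op
variable {X Y : Type*} [AddCommGroup X] [AddCommGroup Y] [Module ℚ Y]

/-- translation as a ℚ-linear endomorphism of `X → Y` -/
private def trL (v : X) : Module.End ℚ (X → Y) where
  toFun f := fun x => f (x + v)
  map_add' := by intros; rfl
  map_smul' := by intros; rfl

/-- translations as a monoid hom from `Multiplicative X` -/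
private def Ttr : Multiplicative X →* Module.End ℚ (X → Y) where
  toFun v := trL v.toAdd
  map_one' := by
    ext f x
    show f (x + 0) = f x
    rw [add_zero]
  map_mul' a b := by
    ext f x
    show f (x + (a.toAdd + b.toAdd)) = f (x + a.toAdd + b.toAdd)
    rw [add_assoc]

private noncomputable def Phi : AddMonoidAlgebra ℚ X →ₐ[ℚ] Module.End ℚ (X → Y) :=
  AddMonoidAlgebra.lift ℚ _ X Ttr

private noncomputable def gg (v : X) : AddMonoidAlgebra ℚ X := AddMonoidAlgebra.single v 1

private lemma gg_mul (v w : X) : (gg v : AddMonoidAlgebra ℚ X) * gg w = gg (v + w) := by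
  rw [gg, gg, gg, AddMonoidAlgebra.single_mul_single, one_mul]

private lemma gg_pow (v : X) : ∀ j : ℕ, (gg v : AddMonoidAlgebra ℚ X)^j = gg (j • v) := by
  intro j
  induction j with
  | zero =>
    rw [pow_zero, zero_smul]
    rfl
  | succ j ih =>
    rw [pow_succ, ih, gg_mul, succ_nsmul]

private lemma Phi_gg_apply (v : X) (f : X → Y) : Phi (gg v) f = fun x => f (x + v) := by
  rw [gg, Phi, AddMonoidAlgebra.lift_single, one_smul]
  rfl

private lemma Phi_d_apply (v : X) (f : X → Y) : Phi (gg v - 1) f = dd v f := by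
  rw [map_sub, map_one, LinearMap.sub_apply, Module.End.one_apply, Phi_gg_apply]
  rfl

private lemma Phi_d_pow_apply (v : X) (f : X → Y) :
    ∀ n : ℕ, Phi ((gg v - 1)^n) f = (dd v)^[n] f := by
  intro n
  induction n with
  | zero => rw [pow_zero, map_one]; rfl
  | succ n ih =>
    rw [Function.iterate_succ_apply', pow_succ', map_mul, Module.End.mul_apply, ih, Phi_d_apply]

/-! ### The key order-reduction lemma -/

private lemma key {f : X → Y} {m : ℕ}
    (H : ∀ v : X, Phi ((gg v - 1)^(m+1)) f = 0) (w u : X) :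
    Phi (((gg w : AddMonoidAlgebra ℚ X) - 1)^m * (gg u - 1)) f = 0 := by
  set RX := AddMonoidAlgebra ℚ X with hRX
  have step1 : ∀ (v : X) (Z : RX), Phi ((gg v - 1)^(m+1) * Z) f = 0 := by
    intro v Z
    rw [mul_comm, map_mul, Module.End.mul_apply, H v]
    exact map_zero _
  have step2 : ∀ Z : RX, Phi ((gg w - 1)^m
      * (∑ i ∈ range (m+2), (-1:RX)^(m+1+i) * ((m+1).choose i : RX) * (i:RX)^m * (gg u)^i) * Z) f = 0 := by
    intro Z
    have hL : Phi ((∑ j ∈ range (m+1), (-1:RX)^(m+j) * (m.choose j : RX) * ((gg w)^j * (gg u) - 1)^(m+1)) * Z) f = 0 := by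
      rw [Finset.sum_mul, map_sum, LinearMap.sum_apply]
      refine Finset.sum_eq_zero fun j hj => ?_
      have e : (-1:RX)^(m+j) * (m.choose j : RX) * ((gg w)^j * (gg u) - 1)^(m+1) * Z
          = (gg ((j • w) + u) - 1)^(m+1) * ((-1:RX)^(m+j) * (m.choose j : RX) * Z) := by
        rw [← gg_mul, ← gg_pow]
        ring
      rw [e]
      exact step1 _ _
    rw [I1 (gg w) (gg u) m] at hL
    have hdiff : Phi ((∑ i ∈ range (m+2), (-1:RX)^(m+1+i) * ((m+1).choose i : RX) * (((gg w)^i - 1)^m * (gg u)^i)) * Z) f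
        = Phi ((gg w - 1)^m * (∑ i ∈ range (m+2), (-1:RX)^(m+1+i) * ((m+1).choose i : RX) * (i:RX)^m * (gg u)^i) * Z) f := by
      rw [Finset.sum_mul, map_sum, LinearMap.sum_apply, Finset.mul_sum, Finset.sum_mul,
        map_sum, LinearMap.sum_apply]
      refine Finset.sum_congr rfl fun i hi => ?_
      obtain ⟨W, hW⟩ := pow_sub_one_decomp (gg w : RX) i m
      have e : (-1:RX)^(m+1+i) * ((m+1).choose i : RX) * (((gg w)^i - 1)^m * (gg u)^i) * Z
          = (gg w - 1)^m * ((-1:RX)^(m+1+i) * ((m+1).choose i : RX) * (i:RX)^m * (gg u)^i) * Z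
            + (gg w - 1)^(m+1) * ((-1:RX)^(m+1+i) * ((m+1).choose i : RX) * W * (gg u)^i * Z) := by
        rw [hW]; ring
      rw [e, map_add, LinearMap.add_apply, step1 w _, add_zero]
    rw [← hdiff]
    exact hL
  -- inversion step
  obtain ⟨Q, hQ⟩ := P_decomp (gg u : RX) m
  set b : RX := gg u - 1 with hb
  set c : ℚ := ((m+1).factorial : ℚ) with hc
  have hcne : c ≠ 0 := by
    rw [hc]
    exact_mod_cast Nat.cast_ne_zero.mpr (Nat.factorial_ne_zero (m+1))
  set cinv : RX := algebraMap ℚ RX c⁻¹ with hcinv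
  set e : RX := cinv * (b * Q) with he
  have hco : cinv * (((m+1).factorial : ℕ) : RX) = 1 := by
    rw [hcinv]
    have : ((((m+1).factorial : ℕ)) : RX) = algebraMap ℚ RX c := by
      rw [hc]
      simp
    rw [this, ← map_mul, inv_mul_cancel₀ hcne, map_one]
  have hgeom : (1 + e) * ∑ j ∈ range (m+1), (-e)^j = 1 - (-e)^(m+1) := by
    have := geom_sum_mul (-e) (m+1)
    linear_combination -this
  have hmain : Phi ((gg w - 1)^m * b * ((1:RX) - (-e)^(m+1))) f = 0 := by
    have h2 := step2 (cinv * ∑ j ∈ range (m+1), (-e)^j)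
    rw [hQ] at h2
    have e2 : (gg w - 1)^m * ((((m+1).factorial : ℕ) : RX) * b + b^2 * Q) * (cinv * ∑ j ∈ range (m+1), (-e)^j)
        = (gg w - 1)^m * b * ((cinv * (((m+1).factorial : ℕ) : RX) + e) * ∑ j ∈ range (m+1), (-e)^j) := by
      rw [he]; ring
    rw [e2, hco, hgeom] at h2
    exact h2
  have hlast : Phi ((gg w - 1)^m * b * (-e)^(m+1)) f = 0 := by
    have eneg : -e = -cinv * b * Q := by rw [he]; ring
    have e3 : (gg w - 1)^m * b * (-e)^(m+1)
        = b^(m+1) * ((gg w - 1)^m * b * (-cinv)^(m+1) * Q^(m+1)) := by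
      rw [eneg, mul_pow, mul_pow]; ring
    rw [e3]
    exact step1 u _
  have e4 : ((gg w : RX) - 1)^m * (gg u - 1)
      = (gg w - 1)^m * b * ((1:RX) - (-e)^(m+1)) + (gg w - 1)^m * b * (-e)^(m+1) := by
    rw [hb]; ring
  rw [e4, map_add, LinearMap.add_apply, hmain, hlast, add_zero]

/-! ### Main induction -/

private lemma dd_comm (a b : X) (f : X → Y) : dd a (dd b f) = dd b (dd a f) := by
  funext x
  simp only [dd]
  rw [add_right_comm]
  abel

private lemma dd_ddIter (a : X) (f : X → Y) :
    ∀ l : List X, dd a (ddIter l f) = ddIter l (dd a f) := by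
  intro l
  induction l with
  | nil => rfl
  | cons b t ih =>
    show dd a (dd b (ddIter t f)) = dd b (ddIter t (dd a f))
    rw [dd_comm, ih]

private lemma main_ind : ∀ (n : ℕ) (f : X → Y),
    (∀ v : X, Phi ((gg v - 1)^n) f = 0) → ∀ l : List X, l.length = n → ddIter l f = 0 := by
  intro n
  induction n with
  | zero =>
    intro f H l hl
    rw [List.length_eq_zero_iff] at hl
    subst hl
    have := H 0
    rw [pow_zero, map_one] at this
    exact this
  | succ n ih =>
    intro f H l hl
    cases l with
    | nil => simp at hl
    | cons u t =>
      have ht : t.length = n := by simpa using hl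
      show dd u (ddIter t f) = 0
      rw [dd_ddIter]
      refine ih (dd u f) (fun v => ?_) t ht
      rw [← Phi_d_apply, ← Module.End.mul_apply, ← map_mul]
      exact key H v u

end Op

/-! ### Extension from small steps to all steps, and the main theorem -/

section Norm
variable {X Y : Type*} [NormedAddCommGroup X] [NormedSpace ℝ X] [AddCommGroup Y] [Module ℚ Y]

private lemma extend_all (f : X → Y) (s : ℕ) (ε : ℝ) (hε : 0 < ε)
    (H : ∀ v : X, ‖v‖ < ε → Phi ((gg v - 1)^s) f = 0) :
    ∀ v : X, Phi ((gg v - 1)^s) f = 0 := by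
  have Hn : ∀ n : ℕ, ∀ v : X, ‖v‖ < 2^n * ε → Phi ((gg v - 1)^s) f = 0 := by
    intro n
    induction n with
    | zero => intro v hv; exact H v (by rwa [pow_zero, one_mul] at hv)
    | succ n ih =>
      intro v hv
      set h' : X := (2⁻¹ : ℝ) • v with hh'
      have hsum : h' + h' = v := by
        rw [hh', ← add_smul]
        norm_num
      have hnorm : ‖h'‖ < 2^n * ε := by
        rw [hh', norm_smul]
        have : ‖v‖ < 2 * (2^n * ε) := by
          rw [pow_succ] at hv
          nlinarith
        simp only [norm_inv, Real.norm_ofNat]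
        nlinarith [norm_nonneg v]
      have hfac : (gg v : AddMonoidAlgebra ℚ X) - 1 = (gg h' + 1) * (gg h' - 1) := by
        rw [← hsum, ← gg_mul]
        ring
      rw [hfac, mul_pow, map_mul, Module.End.mul_apply, ih h' hnorm]
      exact map_zero _
  intro v
  obtain ⟨n, hn⟩ := pow_unbounded_of_one_lt (R := ℝ) (‖v‖ / ε) one_lt_two
  exact Hn n v (by rwa [div_lt_iff₀ hε] at hn)

end Norm

theorem stmt10 {X Y : Type*} [NormedAddCommGroup X] [NormedSpace ℝ X]
    [AddCommGroup Y] [Module ℚ Y]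
    (f : X → Y) (s : ℕ) (hs : 1 ≤ s) (ε : ℝ) (hε : 0 < ε)
    (H : ∀ x : X, ∀ h : X, ‖h‖ < ε → (dd h)^[s] f x = 0) :
    ∀ (x : X) (h : Fin s → X), ddIter (List.ofFn h) f x = 0 := by
  intro x h
  have H1 : ∀ v : X, ‖v‖ < ε → Phi ((gg v - 1)^s) f = 0 := by
    intro v hv
    rw [Phi_d_pow_apply]
    funext y
    exact H y v hv
  have H2 := extend_all f s ε hε H1
  have := main_ind s f H2 (List.ofFn h) (by simp)
  rw [this]
  rfl
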